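/- arXiv:2410.19294 — 2 statements merged into one kernel-verified Lean document; each statement's English description precedes it below -/
import Mathlib

section
/- Let K be a positive integer, let p(· | y) for y ∈ {1, …, K} be probability density functions on ℝ^d, and let β ∈ ℝ^K be a probability vector with strictly positive entries such that Σ_j β_j p(x | j) > 0 for almost every x. Define the Bayes posterior P(y | x) = β_y p(x | y) / Σ_{j=1}^K β_j p(x | j), and suppose f ∈ ℝ^K satisfies softmax(f)_y = P(y | x); if instead one defines, for each class y and uniform downstream prior, the downstream posterior P_ds(y | x) = p(x | y) / Σ_{j=1}^K p(x | j), then argmax_y P_ds(y | x) = argmax_y (f_y − ln β_y). That is, subtracting the log pre-training prior from the logits yields the Bayes-optimal prediction rule for the class-balanced downstream distribution. -/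
open MeasureTheory

/-- `softmax v y = exp (v y) / ∑ j, exp (v j)`. -/
noncomputable def softmax {K : ℕ} (v : Fin K → ℝ) (y : Fin K) : ℝ :=
  Real.exp (v y) / ∑ j, Real.exp (v j)

/-- Subtracting the log pre-training prior from the logits yields the
Bayes-optimal prediction rule for the class-balanced downstream distribution:
if `softmax f` equals the pre-training posterior (prior `β`) at `x`, then the
argmax of the uniform-prior downstream posterior coincides with the argmax of
`f_y − ln β_y`. -/
theorem debiased_logits_bayes_optimal {d K : ℕ} (hK : 0 < K)
    (p : Fin K → (Fin d → ℝ) → ℝ)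
    (hp0 : ∀ y x, 0 ≤ p y x)
    (hp1 : ∀ y, ∫ x : Fin d → ℝ, p y x = 1)
    (β : Fin K → ℝ) (hβpos : ∀ j, 0 < β j) (hβsum : ∑ j, β j = 1)
    (x : Fin d → ℝ)
    (hxβ : 0 < ∑ j, β j * p j x)
    (f : Fin K → ℝ)
    (hf : ∀ y, softmax f y = β y * p y x / ∑ j, β j * p j x) :
    ∀ y : Fin K,
      (∀ y' : Fin K,
          p y' x / (∑ j, p j x) ≤ p y x / (∑ j, p j x)) ↔
      (∀ y' : Fin K, f y' - Real.log (β y') ≤ f y - Real.log (β y)) := by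
  intro y
  set S : ℝ := ∑ j, β j * p j x with hS
  set T : ℝ := ∑ j, Real.exp (f j) with hT
  have hTpos : 0 < T := by
    apply Finset.sum_pos (fun j _ => Real.exp_pos _)
    exact Finset.univ_nonempty_iff.mpr ⟨⟨0, hK⟩⟩
  -- p y x = (S / T) * exp (f y - log (β y))
  have hp : ∀ z : Fin K, p z x = (S / T) * Real.exp (f z - Real.log (β z)) := by
    intro z
    have h := hf z
    unfold softmax at h
    have hβz := hβpos z
    have : Real.exp (f z) * S = β z * p z x * T := by
      field_simp at h
      have hT' : (∑ j, Real.exp (f j)) ≠ 0 := hTpos.ne'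
      rw [div_eq_iff hT'] at h
      exact h
    have hpz : p z x = Real.exp (f z) * S / (β z * T) := by
      field_simp
      linarith [this]
    rw [hpz, Real.exp_sub, Real.exp_log hβz]
    field_simp
  -- sum of p is positive
  have hPsum : 0 < ∑ j, p j x := by
    calc 0 < S := hxβ
      _ ≤ ∑ j, p j x := by
        apply Finset.sum_le_sum
        intro j _
        nlinarith [hβpos j, hp0 j x, Finset.single_le_sum (f := β)
          (fun i _ => (hβpos i).le) (Finset.mem_univ j), hβsum]
  have hCpos : 0 < S / T := div_pos hxβ hTpos
  constructor
  · intro h y'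
    have := h y'
    have hle : p y' x ≤ p y x := by
      have := div_le_div_iff_of_pos_right (c := ∑ j, p j x) hPsum |>.mp this
      exact this
    rw [hp y', hp y] at hle
    have := le_of_mul_le_mul_left (by linarith [hle] : (S / T) * Real.exp (f y' - Real.log (β y')) ≤ (S / T) * Real.exp (f y - Real.log (β y))) hCpos
    exact Real.exp_le_exp.mp this
  · intro h y'
    have := Real.exp_le_exp.mpr (h y')
    have hle : p y' x ≤ p y x := by
      rw [hp y', hp y]
      exact mul_le_mul_of_nonneg_left this hCpos.le
    gcongr
end

section
/- Let K ≥ 2 and f ∈ ℝ^K. Then the function τ ↦ max_{j ∈ {1,…,K}} softmax(f/τ)_j is antitone (monotonically non-increasing) on (0, ∞). Consequently, for any finite family of logit vectors f(x_1), …, f(x_N) ∈ ℝ^K, the average confidence conf(f, τ) = (1/N) Σ_{i=1}^N max_j softmax(f(x_i)/τ)_j is antitone in τ on (0, ∞). -/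
lemma max_softmax_antitone {K : ℕ} (hK : 0 < K) (v : Fin K → ℝ) :
    AntitoneOn (fun τ : ℝ => ⨆ j : Fin K, softmax (fun i => v i / τ) j)
      (Set.Ioi 0) := by
  haveI : Nonempty (Fin K) := Fin.pos_iff_nonempty.mp hK
  obtain ⟨m, hm⟩ := Finite.exists_max v
  have key : ∀ τ : ℝ, 0 < τ →
      (⨆ j : Fin K, softmax (fun i => v i / τ) j)
        = 1 / ∑ j, Real.exp ((v j - v m) / τ) := by
    intro τ hτ
    have hsum : 0 < ∑ j, Real.exp (v j / τ) :=
      Finset.sum_pos (fun j _ => Real.exp_pos _) Finset.univ_nonempty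
    have hsup : (⨆ j : Fin K, softmax (fun i => v i / τ) j)
        = softmax (fun i => v i / τ) m := by
      apply le_antisymm
      · apply ciSup_le
        intro j
        unfold softmax
        gcongr
        show v j / τ ≤ v m / τ
        gcongr
        exact hm j
      · exact le_ciSup (Set.Finite.bddAbove (Set.finite_range _)) m
    rw [hsup]
    unfold softmax
    have hterm : ∀ j : Fin K,
        Real.exp (v j / τ) = Real.exp (v m / τ) * Real.exp ((v j - v m) / τ) := by
      intro j
      rw [← Real.exp_add]
      congr 1
      field_simp
      ring
    rw [Finset.sum_congr rfl (fun j _ => hterm j), ← Finset.mul_sum,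
      div_mul_eq_div_div, div_self (Real.exp_ne_zero _)]
  intro a ha b hb hab
  simp only [Set.mem_Ioi] at ha hb
  simp only
  rw [key a ha, key b hb]
  apply one_div_le_one_div_of_le
  · exact Finset.sum_pos (fun j _ => Real.exp_pos _) Finset.univ_nonempty
  · apply Finset.sum_le_sum
    intro j _
    apply Real.exp_le_exp.mpr
    have h1 : v j - v m ≤ 0 := sub_nonpos.mpr (hm j)
    rw [div_eq_mul_inv, div_eq_mul_inv]
    exact mul_le_mul_of_nonpos_left (inv_anti₀ ha hab) h1

/-- The maximal softmax probability `τ ↦ max_j softmax (f/τ)_j` is antitone in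
the temperature `τ` on `(0, ∞)`; consequently so is the average confidence
`conf(F, τ) = (1/N) ∑ i, max_j softmax (F i / τ)_j` over any finite family of
logit vectors. -/
theorem confidence_antitone_in_temperature {K : ℕ} (hK : 2 ≤ K)
    (f : Fin K → ℝ) {N : ℕ} (hN : 0 < N) (F : Fin N → Fin K → ℝ) :
    AntitoneOn (fun τ : ℝ => ⨆ j : Fin K, softmax (fun i => f i / τ) j)
      (Set.Ioi 0) ∧
    AntitoneOn (fun τ : ℝ =>
        (1 / N : ℝ) * ∑ i : Fin N, ⨆ j : Fin K, softmax (fun k => F i k / τ) j)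
      (Set.Ioi 0) := by
  have hK0 : 0 < K := by omega
  refine ⟨max_softmax_antitone hK0 f, ?_⟩
  intro a ha b hb hab
  simp only
  apply mul_le_mul_of_nonneg_left _ (by positivity)
  exact Finset.sum_le_sum fun i _ => max_softmax_antitone hK0 (F i) ha hb hab
end
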